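/- For every δ > 0 there exists a finite nonempty set X ⊆ S such that X is a homogeneous δ-solution of (VCP), i.e. d_tH(hom(conv(F[X]) + C), hom 𝒫) ≤ δ. -/

import Mathlib

open Metric Set Pointwise

noncomputable section

/-- `ℝ^m` as a Euclidean space. -/
abbrev Em (m : ℕ) := EuclideanSpace ℝ (Fin m)

/-- `ℝ^(m+1)` realized as the L²-product `ℝ^m × ℝ`. -/
abbrev Em1 (m : ℕ) := WithLp 2 (Em m × ℝ)

/-- The conic hull: all finite nonnegative combinations of elements of `M`. -/
def coneHull {V : Type*} [AddCommMonoid V] [Module ℝ V] (M : Set V) : Set V :=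
  {x | ∃ (k : ℕ) (c : Fin k → ℝ) (v : Fin k → V),
    (∀ i, 0 ≤ c i) ∧ (∀ i, v i ∈ M) ∧ x = ∑ i, c i • v i}

/-- The vector `(y, 1) ∈ ℝ^(m+1)` obtained by appending a last coordinate `1` to `y`. -/
def lift1 {m : ℕ} (y : Em m) : Em1 m := (WithLp.equiv 2 (Em m × ℝ)).symm (y, 1)

/-- The homogenization `hom Z = cl (cone (Z × {1}))` of a set `Z ⊆ ℝ^m`. -/
def homog {m : ℕ} (Z : Set (Em m)) : Set (Em1 m) := closure (coneHull (lift1 '' Z))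

/-- The truncated Hausdorff distance `d_tH(K₁, K₂) = d_H(K₁ ∩ 𝔹, K₂ ∩ 𝔹)`. -/
def dtH {V : Type*} [NormedAddCommGroup V] (K₁ K₂ : Set V) : ℝ :=
  hausdorffDist (K₁ ∩ closedBall 0 1) (K₂ ∩ closedBall 0 1)

namespace ConeHullLemmas
variable {V : Type*} [AddCommMonoid V] [Module ℝ V] {M N : Set V}

lemma zero_mem (M : Set V) : (0:V) ∈ coneHull M :=
  ⟨0, Fin.elim0, Fin.elim0, fun i => i.elim0, fun i => i.elim0, by simp⟩

lemma subset (M : Set V) : M ⊆ coneHull M := fun v hv =>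
  ⟨1, fun _ => 1, fun _ => v, fun _ => zero_le_one, fun _ => hv, by simp⟩

lemma mono (h : M ⊆ N) : coneHull M ⊆ coneHull N := by
  rintro x ⟨k, c, v, hc, hv, rfl⟩
  exact ⟨k, c, v, hc, fun i => h (hv i), rfl⟩

lemma smul_mem {x : V} (hx : x ∈ coneHull M) {r : ℝ} (hr : 0 ≤ r) : r • x ∈ coneHull M := by
  obtain ⟨k, c, v, hc, hv, rfl⟩ := hx
  exact ⟨k, fun i => r * c i, v, fun i => mul_nonneg hr (hc i), hv, by
    rw [Finset.smul_sum]; simp only [smul_smul]⟩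

lemma add_mem {x y : V} (hx : x ∈ coneHull M) (hy : y ∈ coneHull M) : x + y ∈ coneHull M := by
  obtain ⟨k, c, v, hc, hv, rfl⟩ := hx
  obtain ⟨l, d, w, hd, hw, rfl⟩ := hy
  refine ⟨k + l, Fin.append c d, Fin.append v w, ?_, ?_, ?_⟩
  · intro i
    refine Fin.addCases (fun i => ?_) (fun i => ?_) i <;> simp [hc, hd]
  · intro i
    refine Fin.addCases (fun i => ?_) (fun i => ?_) i <;> simp [hv, hw]
  · rw [Fin.sum_univ_add]
    simp [Fin.append_left, Fin.append_right]

lemma sum_mem {ι : Type*} (s : Finset ι) (c : ι → ℝ) (v : ι → V)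
    (hc : ∀ i ∈ s, 0 ≤ c i) (hv : ∀ i ∈ s, v i ∈ M) :
    ∑ i ∈ s, c i • v i ∈ coneHull M := by
  classical
  induction s using Finset.induction_on with
  | empty => simpa using zero_mem M
  | insert a s hni ih =>
    rw [Finset.sum_insert hni]
    exact add_mem
      (smul_mem (subset M (hv a (Finset.mem_insert_self a s))) (hc a (Finset.mem_insert_self a s)))
      (ih (fun i hi => hc i (Finset.mem_insert_of_mem hi))
        (fun i hi => hv i (Finset.mem_insert_of_mem hi)))

lemma min {P : Set V} (hMP : M ⊆ P) (h0 : (0:V) ∈ P)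
    (hadd : ∀ a ∈ P, ∀ b ∈ P, a + b ∈ P)
    (hsmul : ∀ r : ℝ, 0 ≤ r → ∀ a ∈ P, r • a ∈ P) :
    coneHull M ⊆ P := by
  rintro x ⟨k, c, v, hc, hv, rfl⟩
  refine Finset.sum_induction _ (· ∈ P) (fun a b ha hb => hadd a ha b hb) h0 ?_
  exact fun i _ => hsmul _ (hc i) _ (hMP (hv i))

end ConeHullLemmas

lemma closure_coneHull_min {V : Type*} [NormedAddCommGroup V] [NormedSpace ℝ V] {M : Set V} :
    coneHull (closure (coneHull M)) ⊆ closure (coneHull M) := by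
  refine ConeHullLemmas.min le_rfl (subset_closure (ConeHullLemmas.zero_mem M)) ?_ ?_
  · intro a ha b hb
    exact map_mem_closure₂ continuous_add ha hb (fun x hx y hy => ConeHullLemmas.add_mem hx hy)
  · intro r hr a ha
    exact map_mem_closure (continuous_const_smul r) ha (fun x hx => ConeHullLemmas.smul_mem hx hr)

lemma lift1_eq' {m : ℕ} (y : Em m) :
    lift1 y = (WithLp.prodContinuousLinearEquiv 2 ℝ (Em m) ℝ).symm (y, 1) := rfl

lemma lift1_continuous {m : ℕ} : Continuous (lift1 (m := m)) := by
  have : lift1 (m := m) = fun y => (WithLp.prodContinuousLinearEquiv 2 ℝ (Em m) ℝ).symm (y, 1) := rfl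
  rw [this]
  exact (WithLp.prodContinuousLinearEquiv 2 ℝ (Em m) ℝ).symm.continuous.comp
    (continuous_id.prodMk continuous_const)

lemma lift1_sum {m : ℕ} {ι : Type*} (t : Finset ι) (w : ι → ℝ) (y : ι → Em m)
    (hw : ∑ i ∈ t, w i = 1) :
    lift1 (∑ i ∈ t, w i • y i) = ∑ i ∈ t, w i • lift1 (y i) := by
  set e := WithLp.prodContinuousLinearEquiv 2 ℝ (Em m) ℝ
  apply e.injective
  simp only [lift1_eq', e.apply_symm_apply, map_sum, map_smul]
  rw [Prod.ext_iff]
  refine ⟨by simp [e, Prod.fst_sum], ?_⟩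
  simpa [e, Prod.snd_sum] using hw.symm

/-- For every `δ > 0` there exists a finite nonempty `X ⊆ S` which is a homogeneous
`δ`-solution of (VCP), i.e. `d_tH(hom (conv F[X] + C), hom 𝒫) ≤ δ` where
`𝒫 = cl (F[S] + C)` is the upper image. -/
theorem exists_finite_homogeneous_delta_solution
    {n m : ℕ} (S : Set (Em n)) (hSne : S.Nonempty) (hSconv : Convex ℝ S)
    (C : Set (Em m)) (hC0 : (0 : Em m) ∈ C)
    (hCcone : ∀ c ∈ C, ∀ r : ℝ, 0 ≤ r → r • c ∈ C)
    (hCconv : Convex ℝ C) (hCclosed : IsClosed C)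
    (hCpointed : C ∩ (-C) ⊆ {0}) (hCnontrivial : C ≠ {0})
    (F : Em n → Em m)
    (hFconv : ∀ x₁ x₂ : Em n, ∀ l : ℝ, l ∈ Set.Ioo (0:ℝ) 1 →
      l • F x₁ + (1 - l) • F x₂ - F (l • x₁ + (1 - l) • x₂) ∈ C)
    (δ : ℝ) (hδ : 0 < δ) :
    ∃ X : Set (Em n), X.Finite ∧ X.Nonempty ∧ X ⊆ S ∧
      dtH (homog (convexHull ℝ (F '' X) + C)) (homog (closure (F '' S + C))) ≤ δ := by
  classical
  set W : Set (Em m) := F '' S + C with hWdef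
  set D : Set (Em1 m) := coneHull (lift1 '' W) with hDdef
  set K : Set (Em1 m) := homog (closure W) with hKdef
  set DX : Set (Em n) → Set (Em1 m) :=
    fun X => coneHull (lift1 '' (convexHull ℝ (F '' X) + C)) with hDXdef
  -- K = closure D
  have hKD : K = closure D := by
    apply le_antisymm
    · refine closure_minimal ?_ isClosed_closure
      refine (ConeHullLemmas.mono ?_).trans closure_coneHull_min
      calc lift1 '' closure W ⊆ closure (lift1 '' W) :=
            image_closure_subset_closure_image lift1_continuous
        _ ⊆ closure D := closure_mono (ConeHullLemmas.subset _)
    · exact closure_mono (ConeHullLemmas.mono (image_mono subset_closure))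
  have hδ3 : (0:ℝ) < δ / 3 := by linarith
  -- each DX X with X ⊆ S sits inside D
  have hDXsub : ∀ X : Set (Em n), X ⊆ S → DX X ⊆ D := by
    intro X hXS
    refine ConeHullLemmas.min ?_ (ConeHullLemmas.zero_mem _)
      (fun a ha b hb => ConeHullLemmas.add_mem ha hb)
      (fun r hr a ha => ConeHullLemmas.smul_mem ha hr)
    rintro _ ⟨u, hu, rfl⟩
    obtain ⟨y, hy, c, hc, rfl⟩ := hu
    rw [convexHull_eq] at hy
    obtain ⟨ι, t, w, z, hw0, hw1, hz, rfl⟩ := hy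
    rw [Finset.centerMass_eq_of_sum_1 _ _ hw1]
    show lift1 ((∑ i ∈ t, w i • z i) + c) ∈ D
    have hsum : (∑ i ∈ t, w i • z i) + c = ∑ i ∈ t, w i • (z i + c) := by
      simp only [smul_add, Finset.sum_add_distrib, ← Finset.sum_smul, hw1, one_smul]
    rw [hsum, lift1_sum _ _ _ hw1]
    refine ConeHullLemmas.sum_mem _ _ _ (fun i hi => hw0 i hi) ?_
    intro i hi
    exact ⟨z i + c, add_mem_add (image_mono hXS (hz i hi)) hc, rfl⟩
  -- the key approximation: every point of K ∩ 𝔹 is close to some DX X ∩ 𝔹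
  have key : ∀ z ∈ K ∩ closedBall (0 : Em1 m) 1, ∃ X : Set (Em n), X.Finite ∧ X ⊆ S ∧
      ∃ w', w' ∈ DX X ∧ ‖w'‖ ≤ 1 ∧ dist z w' ≤ 2 * δ / 3 := by
    rintro z ⟨hzK, hzB⟩
    have hzD : z ∈ closure D := hKD ▸ hzK
    obtain ⟨w, hwD, hwz⟩ := Metric.mem_closure_iff.mp hzD (δ/3) hδ3
    obtain ⟨k, c, v, hc, hv, rfl⟩ := hwD
    choose u hu hvu using hv
    have hu' : ∀ i, ∃ a ∈ S, ∃ d ∈ C, F a + d = u i := by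
      intro i
      obtain ⟨b, hb, d, hd, hbd⟩ := hu i
      obtain ⟨a, ha, rfl⟩ := hb
      exact ⟨a, ha, d, hd, hbd⟩
    choose a ha d hd had using hu'
    set w := ∑ i, c i • v i with hwdef
    refine ⟨Set.range a, Set.finite_range a, Set.range_subset_iff.mpr ha, ?_⟩
    have hwDX : w ∈ DX (Set.range a) := by
      refine ⟨k, c, v, hc, fun i => ?_, rfl⟩
      refine ⟨u i, ?_, hvu i⟩
      rw [← had i]
      exact add_mem_add (subset_convexHull ℝ _ ⟨a i, ⟨i, rfl⟩, rfl⟩) (hd i)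
    by_cases h1 : ‖w‖ ≤ 1
    · exact ⟨w, hwDX, h1, by linarith⟩
    · push_neg at h1
      have hwpos : (0:ℝ) < ‖w‖ := by linarith
      refine ⟨‖w‖⁻¹ • w, ConeHullLemmas.smul_mem hwDX (inv_nonneg.mpr hwpos.le), ?_, ?_⟩
      · rw [norm_smul, norm_inv, norm_norm, inv_mul_cancel₀ hwpos.ne']
      · have hzn : ‖z‖ ≤ 1 := mem_closedBall_zero_iff.mp hzB
        have h2 : dist w (‖w‖⁻¹ • w) = ‖w‖ - 1 := by
          rw [dist_eq_norm]
          have : w - ‖w‖⁻¹ • w = (1 - ‖w‖⁻¹) • w := by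
            rw [sub_smul, one_smul]
          rw [this, norm_smul, Real.norm_eq_abs, abs_of_nonneg, sub_mul, one_mul,
            inv_mul_cancel₀ hwpos.ne']
          have : ‖w‖⁻¹ ≤ 1 := by
            rw [inv_le_one_iff₀]; right; linarith
          linarith
        have h3 : ‖w‖ - 1 ≤ dist z w := by
          have := norm_sub_norm_le w z
          rw [dist_comm, dist_eq_norm]
          linarith
        calc dist z (‖w‖⁻¹ • w) ≤ dist z w + dist w (‖w‖⁻¹ • w) := dist_triangle _ _ _
          _ ≤ δ/3 + (‖w‖ - 1) := by rw [h2]; linarith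
          _ ≤ δ/3 + δ/3 := by linarith
          _ ≤ 2 * δ / 3 := by linarith
  -- compactness argument
  set Q : Set (Em1 m) := K ∩ closedBall 0 1 with hQdef
  have hQcomp : IsCompact Q := by
    refine (isCompact_closedBall (0 : Em1 m) 1).inter_left ?_
    rw [hKD]; exact isClosed_closure
  have hcover : Q ⊆ ⋃ z ∈ Q, ball z (δ/3) :=
    fun z hz => mem_biUnion hz (mem_ball_self hδ3)
  obtain ⟨T, hTQ, hTfin, hTcov⟩ :=
    hQcomp.elim_finite_subcover_image (fun z _ => isOpen_ball) hcover
  choose Xf hXfin hXsub wf hwfD hwfnorm hwfd using key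
  haveI := hTfin.to_subtype
  set x₀ := hSne.some with hx0
  set X : Set (Em n) := insert x₀ (⋃ t : T, Xf t.1 (hTQ t.2)) with hXdef
  have hXfin' : X.Finite := (Set.finite_iUnion (fun t => hXfin _ (hTQ t.2))).insert x₀
  have hXS : X ⊆ S := by
    rw [hXdef]
    exact Set.insert_subset hSne.some_mem (Set.iUnion_subset fun t => hXsub _ (hTQ t.2))
  refine ⟨X, hXfin', ⟨x₀, Set.mem_insert _ _⟩, hXS, ?_⟩
  -- final Hausdorff distance bound
  show hausdorffDist (homog (convexHull ℝ (F '' X) + C) ∩ closedBall 0 1)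
    (homog (closure (F '' S + C)) ∩ closedBall 0 1) ≤ δ
  have hKX : homog (convexHull ℝ (F '' X) + C) = closure (DX X) := rfl
  have hKK : homog (closure (F '' S + C)) = K := rfl
  rw [hKX, hKK]
  apply hausdorffDist_le_of_mem_dist hδ.le
  · rintro x ⟨hx, hxB⟩
    refine ⟨x, ⟨?_, hxB⟩, by simp [hδ.le]⟩
    rw [hKD]
    exact closure_mono (hDXsub X hXS) hx
  · rintro z hzQ
    obtain ⟨t, ht, hzt⟩ := mem_iUnion₂.mp (hTcov hzQ)
    have htQ : t ∈ Q := hTQ ht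
    set w' := wf t htQ with hw'def
    have hsubX : Xf t htQ ⊆ X := by
      rw [hXdef]
      exact (Set.subset_iUnion (fun (s : T) => Xf s.1 (hTQ s.2)) ⟨t, ht⟩).trans
        (Set.subset_insert _ _)
    refine ⟨w', ⟨subset_closure (ConeHullLemmas.mono ?_ (hwfD t htQ)), ?_⟩, ?_⟩
    · exact image_mono (Set.add_subset_add_right (convexHull_mono (image_mono hsubX)))
    · exact mem_closedBall_zero_iff.mpr (hwfnorm t htQ)
    · have h1 : dist z t < δ/3 := mem_ball.mp hzt
      have h2 : dist t w' ≤ 2 * δ / 3 := hwfd t htQ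
      calc dist z w' ≤ dist z t + dist t w' := dist_triangle _ _ _
        _ ≤ δ/3 + 2*δ/3 := by linarith
        _ ≤ δ := by linarith
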